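/- There exists an oriented clique on 11 vertices whose underlying graph is 4-regular; consequently the oriented chromatic number of the family of orientations of connected graphs with maximum degree at most 4 is at least 11. -/
import Mathlib

theorem exists_quartic_oclique_11 : ∃ E : Fin 11 → Fin 11 → Prop,
    (∀ a b, E a b → ¬ E b a) ∧
    (∀ x y : Fin 11, x ≠ y →
      E x y ∨ E y x ∨ (∃ z, E x z ∧ E z y) ∨ (∃ z, E y z ∧ E z x)) ∧
    (∀ x, ({y | E x y ∨ E y x}).ncard = 4) ∧
    (∀ (k : ℕ) (c : Fin 11 → Fin k),
      ((∀ a b, E a b → c a ≠ c b) ∧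
       (∀ a b x y, E a b → E x y → c a = c y → c b ≠ c x)) → 11 ≤ k) := by
  refine ⟨fun u v => v - u = 1 ∨ v - u = 3, ?_, ?_, ?_, ?_⟩
  · decide
  · decide
  · intro x
    rw [Set.ncard_eq_toFinset_card']
    revert x; decide
  · rintro k c ⟨h1, h2⟩
    have hinj : Function.Injective c := by
      intro u v huv
      by_contra hne
      rcases (by decide : ∀ x y : Fin 11, x ≠ y →
          ((fun u v => v - u = 1 ∨ v - u = (3:Fin 11)) x y ∨
           (fun u v => v - u = 1 ∨ v - u = 3) y x ∨
           (∃ z, (fun u v => v - u = 1 ∨ v - u = (3:Fin 11)) x z ∧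
             (fun u v => v - u = 1 ∨ v - u = 3) z y) ∨
           (∃ z, (fun u v => v - u = 1 ∨ v - u = (3:Fin 11)) y z ∧
             (fun u v => v - u = 1 ∨ v - u = 3) z x))) u v hne with
        hE | hE | ⟨z, hz1, hz2⟩ | ⟨z, hz1, hz2⟩
      · exact h1 u v hE huv
      · exact h1 v u hE huv.symm
      · exact h2 u z z v hz1 hz2 huv rfl
      · exact h2 v z z u hz1 hz2 huv.symm rfl
    simpa using Fintype.card_le_of_injective c hinj
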